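/- arXiv:0905.4510 — 3 statements merged into one kernel-verified Lean document; each statement's English description precedes it below -/
import Mathlib

section
/- Let φ be holomorphic on the open ball of radius r > 1 centered at 0 with no zeros on the closed unit disk, let a : ℕ → ℂ be its Taylor coefficient sequence at 0 (so Σₙ|a(n)| < ∞), and let α ∈ ℂ with |α| < 1. Define D := (S − αI)A_α + T_a ∘ (I − (S − αI)A_α) as a bounded operator on H. If f ∈ H is nonzero, λ ∈ ℂ, D f = λ f, and λ ≠ 1, then λ = φ(α). -/
open Metric

/-- The Hilbert space `H = ℓ²(ℕ, ℂ)`. -/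
noncomputable abbrev H : Type := lp (fun _ : ℕ => ℂ) 2

/-- Coordinate evaluation as a continuous linear map on `H`. -/
noncomputable def evCLM (j : ℕ) : H →L[ℂ] ℂ :=
  LinearMap.mkContinuous
    { toFun := fun x => x j
      map_add' := fun x y => by
        simp [lp.coeFn_add]
      map_smul' := fun c x => by
        simp [lp.coeFn_smul] }
    1 (fun x => by
      rw [one_mul]; exact lp.norm_apply_le_norm (by norm_num : (2 : ENNReal) ≠ 0) x j)

@[simp] lemma evCLM_apply (j : ℕ) (x : H) : evCLM j x = x j := rfl

set_option maxHeartbeats 1000000 in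
theorem eigenvalue_of_commutator_type_operator {r : ℝ} (hr : 1 < r) {φ : ℂ → ℂ}
    (hφ : AnalyticOnNhd ℂ φ (ball (0 : ℂ) r))
    (hne : ∀ z ∈ closedBall (0 : ℂ) 1, φ z ≠ 0)
    (a : ℕ → ℂ) (ha : ∀ n, a n = iteratedDeriv n φ 0 / (Nat.factorial n : ℂ))
    (hsum : Summable fun n => ‖a n‖)
    {α : ℂ} (hα : ‖α‖ < 1)
    (S S' A Ta : H →L[ℂ] H)
    (hS : ∀ f : H, (S f) 0 = 0 ∧ ∀ j : ℕ, (S f) (j + 1) = f j)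
    (hS' : ∀ (f : H) (j : ℕ), (S' f) j = f (j + 1))
    (hA : HasSum (fun n : ℕ => α ^ n • S' ^ (n + 1)) A)
    (hTa : ∀ (f : H) (j : ℕ), (Ta f) j = ∑ k ∈ Finset.range (j + 1), a (j - k) * f k)
    (f : H) (hf : f ≠ 0) (lam : ℂ)
    (heig : ((S - α • 1) * A + Ta * (1 - (S - α • 1) * A)) f = lam • f)
    (hlam : lam ≠ 1) :
    lam = φ α := by
  -- powers of the left shift
  have hpow : ∀ (n : ℕ) (x : H) (j : ℕ), ((S' ^ n) x) j = x (j + n) := by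
    intro n
    induction n with
    | zero => intro x j; simp
    | succ n ih =>
      intro x j
      rw [pow_succ', ContinuousLinearMap.mul_apply, hS', ih x (j + 1),
        show j + 1 + n = j + (n + 1) by omega]
  -- coordinates of A x
  have hAcoord : ∀ (x : H) (j : ℕ),
      HasSum (fun n : ℕ => α ^ n * x (j + n + 1)) ((A x) j) := by
    intro x j
    have h2 := ((evCLM j).comp (ContinuousLinearMap.apply ℂ H x)).hasSum hA
    refine h2.congr_fun ?_
    intro n
    simp [hpow, lp.coeFn_smul, Nat.add_assoc, -FunLike.coe_pow_eq_iterate]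
    left; have := hpow n (S' x) j; rw [hS'] at this; simpa [Nat.add_assoc] using this.symm
  -- shifted sums
  have hG : ∀ j : ℕ, HasSum (fun n : ℕ => α ^ n * f (j + n))
      (α * (A f) j + f j) := by
    intro j
    have h1 : HasSum (fun n : ℕ => α ^ (n + 1) * f (j + n + 1)) (α * (A f) j) := by
      refine ((hAcoord f j).mul_left α).congr_fun ?_
      intro n; ring
    have h2 := (hasSum_nat_add_iff (f := fun n : ℕ => α ^ n * f (j + n)) 1).mp
      (h1.congr_fun (fun n => by rw [show j + (n + 1) = j + n + 1 by omega]))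
    simpa using h2
  set c : ℂ := α * (A f) 0 + f 0 with hc_def
  have hc : HasSum (fun n : ℕ => α ^ n * f n) c := by
    have := hG 0
    refine this.congr_fun ?_
    intro n; rw [Nat.zero_add]
  -- coordinates of gf := ((S - α•1) * A) f
  set gf : H := ((S - α • 1) * A) f with hgf_def
  have hgcoe : ∀ j : ℕ, gf j = (S (A f)) j - α * (A f) j := by
    intro j
    simp [hgf_def, ContinuousLinearMap.mul_apply, ContinuousLinearMap.sub_apply,
      ContinuousLinearMap.smul_apply, ContinuousLinearMap.one_apply, lp.coeFn_sub,
      lp.coeFn_smul, Pi.sub_apply, Pi.smul_apply, smul_eq_mul]; rfl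
  have hg0 : gf 0 = f 0 - c := by
    rw [hgcoe 0, (hS (A f)).1, hc_def]; ring
  have hg1 : ∀ j : ℕ, gf (j + 1) = f (j + 1) := by
    intro j
    have hAj : (A f) j = α * (A f) (j + 1) + f (j + 1) := by
      have e1 : (A f) j = ∑' n : ℕ, α ^ n * f (j + n + 1) := (hAcoord f j).tsum_eq.symm
      have e2 := (hG (j + 1)).tsum_eq
      rw [e1, ← e2]
      refine tsum_congr fun n => by rw [show j + n + 1 = j + 1 + n by omega]
    rw [hgcoe (j + 1), (hS (A f)).2 j, hAj]; ring
  -- coordinates of f - gf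
  have hx : ∀ k : ℕ, (f - gf) k = if k = 0 then c else 0 := by
    intro k
    have : (f - gf) k = f k - gf k := by
      simp [lp.coeFn_sub, Pi.sub_apply]
    rw [this]
    cases k with
    | zero => simp [hg0]
    | succ k => simp [hg1 k]
  -- coordinates of Ta (f - gf)
  have hTax : ∀ j : ℕ, (Ta (f - gf)) j = a j * c := by
    intro j
    rw [hTa]
    have : ∀ k ∈ Finset.range (j + 1),
        a (j - k) * (f - gf) k = if k = 0 then a j * c else 0 := by
      intro k _
      rw [hx k]
      split_ifs with h
      · subst h; simp
      · simp
    rw [Finset.sum_congr rfl this, Finset.sum_ite_eq' (Finset.range (j + 1)) 0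
      (fun _ => a j * c)]
    simp
  -- eigenvalue equation coordinatewise
  have heig' : ∀ j : ℕ, gf j + (Ta (f - gf)) j = lam * f j := by
    intro j
    have h0 : (((S - α • 1) * A + Ta * (1 - (S - α • 1) * A)) f : ℕ → ℂ) j
        = ((lam • f : H) : ℕ → ℂ) j := by rw [heig]
    have hL : (((S - α • 1) * A + Ta * (1 - (S - α • 1) * A)) f) j
        = gf j + (Ta (f - gf)) j := by
      have e : ((S - α • 1) * A + Ta * (1 - (S - α • 1) * A)) f
          = gf + Ta (f - gf) := by
        simp [hgf_def, ContinuousLinearMap.add_apply, ContinuousLinearMap.mul_apply,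
          ContinuousLinearMap.sub_apply, ContinuousLinearMap.one_apply]
      rw [e]; simp [lp.coeFn_add, Pi.add_apply]
    have hR : ((lam • f : H)) j = lam * f j := by
      simp [lp.coeFn_smul, Pi.smul_apply, smul_eq_mul]
    rw [hL, hR] at h0
    exact h0
  have hkey : ∀ j : ℕ, (1 - lam) * f j = c * ((if j = 0 then 1 else 0) - a j) := by
    intro j
    have h0 := heig' j
    rw [hTax j] at h0
    cases j with
    | zero =>
      rw [hg0] at h0
      rw [if_pos rfl]
      linear_combination h0
    | succ j =>
      rw [hg1 j] at h0
      rw [if_neg (Nat.succ_ne_zero j)]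
      linear_combination h0
  have hlam' : (1 : ℂ) - lam ≠ 0 := sub_ne_zero.mpr (Ne.symm hlam)
  -- c ≠ 0
  have hc0 : c ≠ 0 := by
    intro h
    apply hf
    apply lp.ext
    funext j
    have := hkey j
    rw [h, zero_mul] at this
    have : f j = 0 := by
      have := mul_eq_zero.mp this
      tauto
    simpa using this
  -- Taylor series of φ at 0
  have hφα : HasSum (fun n : ℕ => a n * α ^ n) (φ α) := by
    have hmem : α ∈ ball (0 : ℂ) r := by
      rw [mem_ball_zero_iff]
      calc ‖α‖ < 1 := hα
        _ < r := hr
    have := Complex.hasSum_taylorSeries_on_ball hφ.differentiableOn hmem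
    refine this.congr_fun ?_
    intro n
    rw [ha n]
    simp only [sub_zero, smul_eq_mul]
    field_simp
  -- final computation
  have hsum1 : HasSum (fun n : ℕ => (if n = 0 then c else 0 : ℂ)) c := hasSum_ite_eq 0 c
  have hsum2 : HasSum (fun n : ℕ => c * (a n * α ^ n)) (c * φ α) := hφα.mul_left c
  have hfinal : HasSum (fun n : ℕ => α ^ n * ((1 - lam) * f n)) ((1 - lam) * c) :=
    (hc.mul_left (1 - lam)).congr_fun (fun n => by ring)
  have hfinal' : HasSum (fun n : ℕ => (if n = 0 then c else 0 : ℂ) - c * (a n * α ^ n))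
      ((1 - lam) * c) := by
    refine hfinal.congr_fun ?_
    intro n
    rw [hkey n]
    split_ifs with h
    · subst h; simp; ring
    · ring
  have := (hsum1.sub hsum2).unique hfinal'
  -- this : c - c * φ α = (1 - lam) * c
  have : (1 - lam) * c = (1 - φ α) * c := by linear_combination -this
  have := mul_right_cancel₀ hc0 this
  linear_combination -this
end

section
/- Let φ be holomorphic on the open ball of radius r > 1 centered at 0 with no zeros on the closed unit disk, let a : ℕ → ℂ be its Taylor coefficient sequence at 0 (so Σₙ|a(n)| < ∞), and let α ∈ ℂ with |α| < 1. Define D := (S − αI)A_α + T_a ∘ (I − (S − αI)A_α), and let g ∈ H be the sequence with g(0) = a(0) − 1 and g(k) = a(k) for k ≥ 1. Then D g = φ(α) · g. -/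
open Metric

/-- Coordinate evaluation as a continuous linear map. -/
noncomputable def coordCLM (j : ℕ) : H →L[ℂ] ℂ :=
  LinearMap.mkContinuous
    { toFun := fun f => f j
      map_add' := fun f g => by simp [lp.coeFn_add]
      map_smul' := fun c f => by simp [lp.coeFn_smul] }
    1
    (fun f => by rw [one_mul]; exact lp.norm_apply_le_norm (by norm_num) f j)

@[simp] lemma coordCLM_apply (j : ℕ) (f : H) : coordCLM j f = f j := rfl

theorem eigenvector_of_commutator_type_operator {r : ℝ} (hr : 1 < r) {φ : ℂ → ℂ}
    (hφ : AnalyticOnNhd ℂ φ (ball (0 : ℂ) r))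
    (hne : ∀ z ∈ closedBall (0 : ℂ) 1, φ z ≠ 0)
    (a : ℕ → ℂ) (ha : ∀ n, a n = iteratedDeriv n φ 0 / (Nat.factorial n : ℂ))
    (hsum : Summable fun n => ‖a n‖)
    {α : ℂ} (hα : ‖α‖ < 1)
    (S S' A Ta : H →L[ℂ] H)
    (hS : ∀ f : H, (S f) 0 = 0 ∧ ∀ j : ℕ, (S f) (j + 1) = f j)
    (hS' : ∀ (f : H) (j : ℕ), (S' f) j = f (j + 1))
    (hA : HasSum (fun n : ℕ => α ^ n • S' ^ (n + 1)) A)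
    (hTa : ∀ (f : H) (j : ℕ), (Ta f) j = ∑ k ∈ Finset.range (j + 1), a (j - k) * f k)
    (g : H) (hg0 : g 0 = a 0 - 1) (hgk : ∀ k : ℕ, g (k + 1) = a (k + 1)) :
    ((S - α • 1) * A + Ta * (1 - (S - α • 1) * A)) g = φ α • g := by
  -- Taylor series of φ at 0 evaluated at α
  have hφα : HasSum (fun n : ℕ => a n * α ^ n) (φ α) := by
    have hd : DifferentiableOn ℂ φ (ball (0 : ℂ) r) :=
      fun z hz => ((hφ z hz).differentiableAt).differentiableWithinAt
    have hz : α ∈ ball (0 : ℂ) r := by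
      simp only [mem_ball, dist_zero_right]
      exact lt_trans hα hr
    have := Complex.hasSum_taylorSeries_on_ball hd hz
    have e : (fun n : ℕ => a n * α ^ n)
        = fun n : ℕ => ((n.factorial : ℂ))⁻¹ • (α - 0) ^ n • iteratedDeriv n φ 0 := by
      funext n
      rw [ha n]
      simp [smul_eq_mul]
      ring
    rw [e]
    exact this
  -- iterated shift
  have hpow : ∀ (n : ℕ) (f : H) (j : ℕ), ((S' ^ n) f) j = f (j + n) := by
    intro n
    induction n with
    | zero => intro f j; simp
    | succ n ih =>
      intro f j
      rw [pow_succ, ContinuousLinearMap.mul_apply, ih (S' f) j, hS', add_assoc]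
  -- coordinatewise formula for A g
  have hAg : ∀ j : ℕ, HasSum (fun n : ℕ => α ^ n * g (j + n + 1)) ((A g) j) := by
    intro j
    have h1 := hA.mapL ((coordCLM j).comp (ContinuousLinearMap.apply ℂ H g))
    convert h1 using 2 with n
    simp only [ContinuousLinearMap.coe_comp', Function.comp_apply,
      ContinuousLinearMap.apply_apply, ContinuousLinearMap.smul_apply, coordCLM_apply,
      lp.coeFn_smul, Pi.smul_apply, smul_eq_mul, hpow]
    rw [add_assoc]
    rfl
  -- the operator h := ((S - α•1) * A) g
  set u : H := A g with hu
  set h : H := ((S - α • 1) * A) g with hh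
  have hcoord : ∀ j, h j = (S u) j - α * u j := by
    intro j
    have : h = S u - α • u := by
      rw [hh]
      simp [ContinuousLinearMap.mul_apply, sub_smul, ContinuousLinearMap.sub_apply]
      rfl
    rw [this, lp.coeFn_sub, Pi.sub_apply, lp.coeFn_smul, Pi.smul_apply, smul_eq_mul]
  -- value of φα - a 0
  have hshift : HasSum (fun n : ℕ => a (n + 1) * α ^ (n + 1)) (φ α - a 0) := by
    have := (hasSum_nat_add_iff' (f := fun n => a n * α ^ n) 1).mpr hφα
    simpa using this
  have h0 : h 0 = a 0 - φ α := by
    have e1 : HasSum (fun n : ℕ => α * (α ^ n * g (0 + n + 1))) (α * u 0) :=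
      (hAg 0).mul_left α
    have e2 : (fun n : ℕ => α * (α ^ n * g (0 + n + 1)))
        = fun n : ℕ => a (n + 1) * α ^ (n + 1) := by
      funext n
      rw [show (0 : ℕ) + n + 1 = n + 1 by omega, hgk, pow_succ]
      ring
    rw [e2] at e1
    have : α * u 0 = φ α - a 0 := e1.unique hshift
    rw [hcoord 0, (hS u).1, this]
    ring
  have hj : ∀ j : ℕ, h (j + 1) = a (j + 1) := by
    intro j
    have e1 : HasSum (fun n : ℕ => α * (α ^ n * g (j + 1 + n + 1))) (α * u (j + 1)) :=
      (hAg (j + 1)).mul_left α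
    have e3 : HasSum (fun n : ℕ => α ^ (n + 1) * g (j + (n + 1) + 1)) (u j - g (j + 1)) := by
      have := (hasSum_nat_add_iff' (f := fun n => α ^ n * g (j + n + 1)) 1).mpr (hAg j)
      simpa using this
    have e2 : (fun n : ℕ => α * (α ^ n * g (j + 1 + n + 1)))
        = fun n : ℕ => α ^ (n + 1) * g (j + (n + 1) + 1) := by
      funext n
      rw [show j + 1 + n + 1 = j + (n + 1) + 1 by omega, pow_succ]
      ring
    rw [e2] at e1
    have : α * u (j + 1) = u j - g (j + 1) := e1.unique e3
    rw [hcoord (j + 1), (hS u).2 j, this, hgk]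
    ring
  -- now the full computation
  have key : ((S - α • 1) * A + Ta * (1 - (S - α • 1) * A)) g = h + Ta (g - h) := by
    simp [ContinuousLinearMap.add_apply, ContinuousLinearMap.mul_apply,
      ContinuousLinearMap.sub_apply, ContinuousLinearMap.one_apply, hh]
  rw [key]
  apply lp.ext
  funext j
  have hgh : ∀ k : ℕ, (g - h) k = if k = 0 then φ α - 1 else 0 := by
    intro k
    rw [lp.coeFn_sub, Pi.sub_apply]
    cases k with
    | zero => simp [hg0, h0]
    | succ k => simp [hgk, hj]
  have hTagh : (Ta (g - h)) j = a j * (φ α - 1) := by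
    rw [hTa]
    rw [Finset.sum_eq_single 0]
    · simp [hgh]
    · intro k hk hk0
      simp [hgh, hk0]
    · intro hk
      simp at hk
  have hadd : (h + Ta (g - h)) j = h j + (Ta (g - h)) j := by
    rw [lp.coeFn_add, Pi.add_apply]
  have hsmul : ((φ α • g : H) : ∀ _ : ℕ, ℂ) j = φ α * g j := by
    rw [lp.coeFn_smul, Pi.smul_apply, smul_eq_mul]
  show (h + Ta (g - h)) j = (φ α • g : H) j
  rw [hadd, hsmul, hTagh]
  cases j with
  | zero => rw [h0, hg0]; ring
  | succ j => rw [hj, hgk]; ring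
end

section
/- Let α, β ∈ ℂ with |α| < 1 and |β| < 1. Define the bounded operator E := (S − αI)(S − βI)A_α A_β + (I − (S − αI)A_α) A_β + (S − αI)(I − (S − βI)A_β) on H (this is T_φ T_ψ T_{φ^{−1}} T_{ψ^{−1}} + (I − T_φ T_{φ^{−1}})T_{ψ^{−1}} + T_φ(I − T_ψ T_{ψ^{−1}}) for φ(z) = z − α, ψ(z) = z − β). If f ∈ H is nonzero, λ ∈ ℂ, E f = λ f, and λ ≠ 1, then λ² + (α − β)λ − 1 = 0. -/
open Metric

private lemma pow_apply' {S' : H →L[ℂ] H} (hS' : ∀ (f : H) (j : ℕ), (S' f) j = f (j + 1)) :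
    ∀ (n : ℕ) (f : H) (j : ℕ), ((S' ^ n) f) j = f (j + n) := by
  intro n
  induction n with
  | zero => intro f j; simp
  | succ n ih =>
    intro f j
    rw [pow_succ, ContinuousLinearMap.mul_apply, ih, hS', Nat.add_assoc]

/-- Coordinate evaluation as a continuous linear map. -/
private noncomputable def ev (j : ℕ) : H →L[ℂ] ℂ :=
  LinearMap.mkContinuous
    { toFun := fun f : H => f j
      map_add' := fun f g => by simp [lp.coeFn_add]
      map_smul' := fun c f => by simp [lp.coeFn_smul] }
    1 (fun f => by
      show ‖f j‖ ≤ 1 * ‖f‖; simpa using lp.norm_apply_le_norm (by norm_num : (2:ENNReal) ≠ 0) f j)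

private lemma ev_apply (j : ℕ) (f : H) : ev j f = f j := rfl

private lemma coord_hasSum {γ : ℂ} {S' A : H →L[ℂ] H}
    (hS' : ∀ (f : H) (j : ℕ), (S' f) j = f (j + 1))
    (hA : HasSum (fun n : ℕ => γ ^ n • S' ^ (n + 1)) A) (f : H) (j : ℕ) :
    HasSum (fun n : ℕ => γ ^ n * f (j + n + 1)) ((A f) j) := by
  have h1 : HasSum (fun n : ℕ => (γ ^ n • S' ^ (n + 1)) f) (A f) :=
    hA.mapL (ContinuousLinearMap.apply ℂ H f)
  have h2 := h1.mapL (ev j)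
  have h3 : (fun n : ℕ => ev j ((γ ^ n • S' ^ (n + 1)) f))
      = fun n : ℕ => γ ^ n * f (j + n + 1) := by
    funext n
    rw [ContinuousLinearMap.smul_apply]
    rw [map_smul]
    rw [ev_apply, pow_apply' hS', smul_eq_mul, Nat.add_assoc]
  rwa [h3] at h2

private lemma step' {γ : ℂ} {S' A : H →L[ℂ] H}
    (hS' : ∀ (f : H) (j : ℕ), (S' f) j = f (j + 1))
    (hA : HasSum (fun n : ℕ => γ ^ n • S' ^ (n + 1)) A) (f : H) (j : ℕ) :
    (A f) j = f (j + 1) + γ * (A f) (j + 1) := by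
  have h0 := coord_hasSum hS' hA f j
  have h1 := (coord_hasSum hS' hA f (j + 1)).mul_left γ
  have h1' : HasSum (fun n : ℕ => γ ^ (n + 1) * f (j + (n + 1) + 1)) (γ * (A f) (j + 1)) := by
    have hfe : (fun n : ℕ => γ ^ (n + 1) * f (j + (n + 1) + 1))
        = fun n : ℕ => γ * (γ ^ n * f (j + 1 + n + 1)) := by
      funext n
      have hi : j + (n + 1) + 1 = j + 1 + n + 1 := by omega
      rw [hi, pow_succ]
      ring
    rw [hfe]; exact h1
  have h2 := (hasSum_nat_add_iff (f := fun n : ℕ => γ ^ n * f (j + n + 1)) 1).mp h1'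
  simp only [Finset.range_one, Finset.sum_singleton, pow_zero, one_mul, Nat.add_zero] at h2
  rw [h0.unique h2]
  ring

theorem eigenvalue_quadratic_of_two_linear_symbols {α β : ℂ} (hα : ‖α‖ < 1) (hβ : ‖β‖ < 1)
    (S S' Aα Aβ : H →L[ℂ] H)
    (hS : ∀ f : H, (S f) 0 = 0 ∧ ∀ j : ℕ, (S f) (j + 1) = f j)
    (hS' : ∀ (f : H) (j : ℕ), (S' f) j = f (j + 1))
    (hAα : HasSum (fun n : ℕ => α ^ n • S' ^ (n + 1)) Aα)
    (hAβ : HasSum (fun n : ℕ => β ^ n • S' ^ (n + 1)) Aβ)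
    (f : H) (hf : f ≠ 0) (lam : ℂ)
    (heig : ((S - α • 1) * (S - β • 1) * Aα * Aβ +
        (1 - (S - α • 1) * Aα) * Aβ +
        (S - α • 1) * (1 - (S - β • 1) * Aβ)) f = lam • f)
    (hlam : lam ≠ 1) :
    lam ^ 2 + (α - β) * lam - 1 = 0 := by
  have hS0 : ∀ p : H, (S p) 0 = 0 := fun p => (hS p).1
  have hS1 : ∀ (p : H) (j : ℕ), (S p) (j + 1) = p j := fun p => (hS p).2
  have hg : ∀ j : ℕ, (Aβ f) j = f (j + 1) + β * (Aβ f) (j + 1) := step' hS' hAβ f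
  have hh : ∀ j : ℕ, (Aα (Aβ f)) j = (Aβ f) (j + 1) + α * (Aα (Aβ f)) (j + 1) :=
    step' hS' hAα (Aβ f)
  -- coordinates ≥ 2 of the eigenvector vanish
  have e2 : ∀ j : ℕ, f (j + 1 + 1) = 0 := by
    intro j
    have k := congrArg (fun x : H => (x : ∀ _ : ℕ, ℂ) (j + 1 + 1)) heig
    simp only [ContinuousLinearMap.add_apply, ContinuousLinearMap.mul_apply,
      ContinuousLinearMap.sub_apply, ContinuousLinearMap.smul_apply, ContinuousLinearMap.one_apply,
      lp.coeFn_add, lp.coeFn_sub, lp.coeFn_smul, Pi.add_apply, Pi.sub_apply, Pi.smul_apply,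
      smul_eq_mul, hS1, hS0] at k
    rw [hh j, hh (j + 1), hg j, hg (j + 1)] at k
    have hz : (lam - 1) * f (j + 1 + 1) = 0 := by linear_combination -k
    rcases mul_eq_zero.mp hz with h | h
    · exact absurd (sub_eq_zero.mp h) hlam
    · exact h
  have hg1 : ∀ j : ℕ, (Aβ f) (j + 1) = 0 := by
    intro j
    have h0 := coord_hasSum hS' hAβ f (j + 1)
    have hfun : (fun n : ℕ => β ^ n * f (j + 1 + n + 1)) = fun _ => (0 : ℂ) := by
      funext n
      have hi : j + 1 + n + 1 = j + n + 1 + 1 := by omega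
      rw [hi, e2, mul_zero]
    rw [hfun] at h0
    exact h0.unique hasSum_zero
  have hg0 : (Aβ f) 0 = f (0 + 1) := by
    have h0 := hg 0
    rw [hg1 0] at h0
    simpa using h0
  have hh0 : ∀ j : ℕ, (Aα (Aβ f)) j = 0 := by
    intro j
    have h0 := coord_hasSum hS' hAα (Aβ f) j
    have hfun : (fun n : ℕ => α ^ n * (Aβ f) (j + n + 1)) = fun _ => (0 : ℂ) := by
      funext n
      rw [hg1 (j + n), mul_zero]
    rw [hfun] at h0
    exact h0.unique hasSum_zero
  -- the two remaining coordinate equations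
  have k0 := congrArg (fun x : H => (x : ∀ _ : ℕ, ℂ) 0) heig
  simp only [ContinuousLinearMap.add_apply, ContinuousLinearMap.mul_apply,
    ContinuousLinearMap.sub_apply, ContinuousLinearMap.smul_apply, ContinuousLinearMap.one_apply,
    lp.coeFn_add, lp.coeFn_sub, lp.coeFn_smul, Pi.add_apply, Pi.sub_apply, Pi.smul_apply,
    smul_eq_mul, hS1, hS0, hh0, hg1, hg0] at k0
  have k1 := congrArg (fun x : H => (x : ∀ _ : ℕ, ℂ) (0 + 1)) heig
  simp only [ContinuousLinearMap.add_apply, ContinuousLinearMap.mul_apply,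
    ContinuousLinearMap.sub_apply, ContinuousLinearMap.smul_apply, ContinuousLinearMap.one_apply,
    lp.coeFn_add, lp.coeFn_sub, lp.coeFn_smul, Pi.add_apply, Pi.sub_apply, Pi.smul_apply,
    smul_eq_mul, hS1, hS0, hh0, hg1, hg0] at k1
  -- the first coordinate of the eigenvector is nonzero
  have hv : f (0 + 1) ≠ 0 := by
    intro hv0
    have hf0 : f 0 = 0 := by linear_combination k1 + (lam - β) * hv0
    refine hf (lp.ext (funext fun j => ?_))
    rw [lp.coeFn_zero, Pi.zero_apply]
    rcases j with _ | j
    · exact hf0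
    · rcases j with _ | j
      · exact hv0
      · exact e2 j
  have key : (lam ^ 2 + (α - β) * lam - 1) * f (0 + 1) = 0 := by
    linear_combination (-1 : ℂ) * k0 - (α + lam) * k1
  rcases mul_eq_zero.mp key with h | h
  · exact h
  · exact absurd h hv
end
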